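/- Let (g,g*) be a purely Hom-Lie bialgebra. Then g ⊕ g* equipped with the bracket [x+ξ, y+η]_⋈ = ([x,y]_g + 𝔞𝔡⋆_ξ y − 𝔞𝔡⋆_η x) + ([ξ,η]_{g*} + ad⋆_x η − ad⋆_y ξ), structure map φ ⊕ (φ⁻¹)*, and the symmetric bilinear form B(x+ξ, y+η) = ξ(y) + η(x), is a quadratic Hom-Lie algebra, and (g⊕g*; g, g*) is a Manin triple for Hom-Lie algebras. -/
import Mathlib


open LinearMap Module

/-- A (regular, i.e. multiplicative with invertible structure map) Hom-Lie algebra. -/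
structure HomLieAlgebra (K g : Type*) [Field K] [AddCommGroup g] [Module K g] where
  bracket : g →ₗ[K] g →ₗ[K] g
  phi : g ≃ₗ[K] g
  skew : ∀ x y, bracket x y = - bracket y x
  phi_bracket : ∀ x y, phi (bracket x y) = bracket (phi x) (phi y)
  jacobi : ∀ x y z,
    bracket (phi x) (bracket y z) + bracket (phi y) (bracket z x)
      + bracket (phi z) (bracket x y) = 0

variable {K g V : Type*} [Field K] [AddCommGroup g] [Module K g]
  [AddCommGroup V] [Module K V]

/-- `ρ` is a representation of the Hom-Lie algebra `L` on `V` with respect to `β`. -/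
def HomLieAlgebra.IsRep (L : HomLieAlgebra K g) (β : V ≃ₗ[K] V)
    (ρ : g →ₗ[K] V →ₗ[K] V) : Prop :=
  (∀ x u, ρ (L.phi x) (β u) = β (ρ x u)) ∧
  (∀ x y u, ρ (L.bracket x y) (β u) = ρ (L.phi x) (ρ y u) - ρ (L.phi y) (ρ x u))

variable [FiniteDimensional K g]

/-- The adjoint action of `x ∈ g` on `∧²g`, encoded on skew bilinear forms on `g*`. -/
def adExt (L : HomLieAlgebra K g) (x : g) (W : Dual K g → Dual K g → K)
    (ξ η : Dual K g) : K :=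
  W (ξ ∘ₗ L.bracket x) (η ∘ₗ L.phi.toLinearMap)
    + W (ξ ∘ₗ L.phi.toLinearMap) (η ∘ₗ L.bracket x)

/-- The coadjoint representation of `g` on `g*`:
`ad⋆_x η = ad*_{φ(x)}((φ⁻²)*(η))`, i.e. `⟨ad⋆_x η, y⟩ = −⟨η, φ⁻²([φ(x), y])⟩`. -/
def coadRep (L : HomLieAlgebra K g) (x : g) (η : Dual K g) : Dual K g :=
  - (η ∘ₗ L.phi.symm.toLinearMap ∘ₗ L.phi.symm.toLinearMap ∘ₗ L.bracket (L.phi x))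

/-- The coadjoint representation of `g*` on `g ≅ g**`:
`𝔞𝔡⋆_ξ y = 𝔞𝔡*_{(φ⁻¹)*(ξ)}(φ²(y))`, i.e. `⟨𝔞𝔡⋆_ξ y, β⟩ = −⟨φ²(y), [(φ⁻¹)*(ξ), β]_{g*}⟩`. -/
noncomputable def coadRepStar (L : HomLieAlgebra K g)
    (Lst : HomLieAlgebra K (Dual K g)) (ξ : Dual K g) (y : g) : g :=
  (evalEquiv K g).symm
    (- (Lst.bracket (ξ ∘ₗ L.phi.symm.toLinearMap)).dualMap (evalEquiv K g (L.phi (L.phi y))))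

/-- The double bracket `[x+ξ, y+η]_⋈` on `g ⊕ g*`. -/
noncomputable def dbBracket (L : HomLieAlgebra K g) (Lst : HomLieAlgebra K (Dual K g))
    (p q : g × Dual K g) : g × Dual K g :=
  (L.bracket p.1 q.1 + coadRepStar L Lst p.2 q.1 - coadRepStar L Lst q.2 p.1,
   Lst.bracket p.2 q.2 + coadRep L p.1 q.2 - coadRep L q.1 p.2)

/-- The structure map `φ ⊕ (φ⁻¹)*` on `g ⊕ g*`. -/
def dbPhi (L : HomLieAlgebra K g) (p : g × Dual K g) : g × Dual K g :=
  (L.phi p.1, p.2 ∘ₗ L.phi.symm.toLinearMap)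

/-- The canonical symmetric bilinear form `B(x+ξ, y+η) = ξ(y) + η(x)`. -/
def dbForm (p q : g × Dual K g) : K := p.2 q.1 + q.2 p.1

set_option linter.unusedSectionVars false
section Aux
variable {K g : Type*} [Field K] [AddCommGroup g] [Module K g] [FiniteDimensional K g]

lemma ext_dual {u v : g} (h : ∀ β : Module.Dual K g, β u = β v) : u = v := by
  have := (Module.forall_dual_apply_eq_zero_iff K (u - v)).mp
    (fun β => by rw [map_sub, h, sub_self])
  exact sub_eq_zero.mp this

lemma pairS (L : HomLieAlgebra K g) (Lst : HomLieAlgebra K (Module.Dual K g))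
    (ξ β : Module.Dual K g) (y : g) :
    β (coadRepStar L Lst ξ y)
      = - Lst.bracket (ξ ∘ₗ L.phi.symm.toLinearMap) β (L.phi (L.phi y)) := by
  have h : Module.evalEquiv K g (coadRepStar L Lst ξ y)
      = - (Lst.bracket (ξ ∘ₗ L.phi.symm.toLinearMap)).dualMap
          (Module.evalEquiv K g (L.phi (L.phi y))) := by
    rw [coadRepStar, LinearEquiv.apply_symm_apply]
  have h2 := congrArg (fun f => f β) h
  simpa using h2

end Aux
section Aux2
open Module LinearMap
variable {K g : Type*} [Field K] [AddCommGroup g] [Module K g] [FiniteDimensional K g]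
variable (L : HomLieAlgebra K g) (Lst : HomLieAlgebra K (Module.Dual K g))

lemma pbs (x y : g) : L.phi.symm (L.bracket x y)
    = L.bracket (L.phi.symm x) (L.phi.symm y) := by
  apply L.phi.injective
  rw [LinearEquiv.apply_symm_apply, L.phi_bracket, LinearEquiv.apply_symm_apply,
    LinearEquiv.apply_symm_apply]

lemma coadRep_apply (x : g) (η : Module.Dual K g) (w : g) :
    coadRep L x η w = - η (L.phi.symm (L.phi.symm (L.bracket (L.phi x) w))) := rfl

lemma coadRep_zero_right (x : g) : coadRep L x 0 = 0 := by
  ext w; simp [coadRep]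

lemma coadRep_zero_left (η : Module.Dual K g) : coadRep L 0 η = 0 := by
  ext w; simp [coadRep]

lemma coadRep_add_left (x x' : g) (η : Module.Dual K g) :
    coadRep L (x + x') η = coadRep L x η + coadRep L x' η := by
  ext w; simp [coadRep]; ring

lemma coadRep_add_right (x : g) (η η' : Module.Dual K g) :
    coadRep L x (η + η') = coadRep L x η + coadRep L x η' := by
  ext w; simp [coadRep]; ring

lemma S_zero_left (y : g) : coadRepStar L Lst 0 y = 0 := by
  apply ext_dual (K := K); intro β; simp [pairS]

lemma S_zero_right (ξ : Module.Dual K g) : coadRepStar L Lst ξ 0 = 0 := by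
  apply ext_dual (K := K); intro β; simp [pairS]

lemma S_add_left (ξ ξ' : Module.Dual K g) (y : g) :
    coadRepStar L Lst (ξ + ξ') y = coadRepStar L Lst ξ y + coadRepStar L Lst ξ' y := by
  apply ext_dual (K := K); intro β; simp [pairS, add_comp]; ring

lemma S_add_right (ξ : Module.Dual K g) (y y' : g) :
    coadRepStar L Lst ξ (y + y') = coadRepStar L Lst ξ y + coadRepStar L Lst ξ y' := by
  apply ext_dual (K := K); intro β; simp [pairS]; ring

end Aux2
section Aux3
open Module LinearMap
set_option linter.unusedSectionVars false
variable {K g : Type*} [Field K] [AddCommGroup g] [Module K g] [FiniteDimensional K g]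
variable (L : HomLieAlgebra K g) (Lst : HomLieAlgebra K (Module.Dual K g))

lemma dbBracket_add_left (p p' q : g × Module.Dual K g) :
    dbBracket L Lst (p + p') q = dbBracket L Lst p q + dbBracket L Lst p' q := by
  apply Prod.ext <;>
    simp [dbBracket, map_add, LinearMap.add_apply, coadRep_add_left, coadRep_add_right,
      S_add_left, S_add_right] <;> abel

lemma dbBracket_add_right (p q q' : g × Module.Dual K g) :
    dbBracket L Lst p (q + q') = dbBracket L Lst p q + dbBracket L Lst p q' := by
  apply Prod.ext <;>
    simp [dbBracket, map_add, LinearMap.add_apply, coadRep_add_left, coadRep_add_right,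
      S_add_left, S_add_right] <;> abel

lemma dbPhi_add (p q : g × Module.Dual K g) :
    dbPhi L (p + q) = dbPhi L p + dbPhi L q := by
  apply Prod.ext <;> simp [dbPhi, map_add, LinearMap.add_comp]

/-- The cyclic Jacobi sum on the double. -/
noncomputable def Jc (p q r : g × Module.Dual K g) : g × Module.Dual K g :=
  dbBracket L Lst (dbPhi L p) (dbBracket L Lst q r)
    + dbBracket L Lst (dbPhi L q) (dbBracket L Lst r p)
    + dbBracket L Lst (dbPhi L r) (dbBracket L Lst p q)

lemma Jc_cyc (p q r : g × Module.Dual K g) : Jc L Lst p q r = Jc L Lst q r p := by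
  rw [Jc, Jc]; abel

lemma Jc_add1 (p p' q r : g × Module.Dual K g) :
    Jc L Lst (p + p') q r = Jc L Lst p q r + Jc L Lst p' q r := by
  simp only [Jc, dbPhi_add, dbBracket_add_left, dbBracket_add_right]
  abel

lemma Jc_add2 (p q q' r : g × Module.Dual K g) :
    Jc L Lst p (q + q') r = Jc L Lst p q r + Jc L Lst p q' r := by
  rw [Jc_cyc, Jc_add1, Jc_cyc L Lst p q r, Jc_cyc L Lst p q' r]

lemma Jc_add3 (p q r r' : g × Module.Dual K g) :
    Jc L Lst p q (r + r') = Jc L Lst p q r + Jc L Lst p q r' := by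
  rw [Jc_cyc, Jc_add2, ← Jc_cyc L Lst p q r, ← Jc_cyc L Lst p q r']

end Aux3
section Aux4
open Module LinearMap
set_option linter.unusedSectionVars false
variable {K g : Type*} [Field K] [AddCommGroup g] [Module K g] [FiniteDimensional K g]
variable {L : HomLieAlgebra K g} {Lst : HomLieAlgebra K (Module.Dual K g)}

local notation "φi" => L.phi.symm.toLinearMap
local notation "φl" => L.phi.toLinearMap

lemma stm (hphi : ∀ (ξ : Module.Dual K g) (x : g), Lst.phi ξ x = ξ (L.phi.symm x))
    (μ ν : Module.Dual K g) :
    Lst.bracket (μ ∘ₗ φi) (ν ∘ₗ φi) = Lst.bracket μ ν ∘ₗ φi := by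
  have hphi' : ∀ ξ, Lst.phi ξ = ξ ∘ₗ φi := fun ξ => LinearMap.ext (hphi ξ)
  rw [← hphi' μ, ← hphi' ν, ← hphi' (Lst.bracket μ ν)]
  exact (Lst.phi_bracket μ ν).symm

lemma comp_phi_symm_phi (ρ : Module.Dual K g) : (ρ ∘ₗ φl) ∘ₗ φi = ρ := by
  ext w; simp

lemma comp_phi_phi_symm (ρ : Module.Dual K g) : (ρ ∘ₗ φi) ∘ₗ φl = ρ := by
  ext w; simp

lemma stmphi (hphi : ∀ (ξ : Module.Dual K g) (x : g), Lst.phi ξ x = ξ (L.phi.symm x))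
    (μ ν : Module.Dual K g) :
    Lst.bracket (μ ∘ₗ φl) (ν ∘ₗ φl) = Lst.bracket μ ν ∘ₗ φl := by
  have h := stm hphi (μ ∘ₗ φl) (ν ∘ₗ φl)
  rw [comp_phi_symm_phi, comp_phi_symm_phi] at h
  rw [h]; ext w; simp

/-- multiplicativity of `S`. -/
lemma keyI (hphi : ∀ (ξ : Module.Dual K g) (x : g), Lst.phi ξ x = ξ (L.phi.symm x))
    (ξ : Module.Dual K g) (y : g) :
    L.phi (coadRepStar L Lst ξ y) = coadRepStar L Lst (ξ ∘ₗ φi) (L.phi y) := by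
  apply ext_dual (K := K); intro β
  have h1 : β (L.phi (coadRepStar L Lst ξ y)) = (β ∘ₗ φl) (coadRepStar L Lst ξ y) := rfl
  rw [h1, pairS, pairS]
  symm
  have h3 : β = (β ∘ₗ φl) ∘ₗ φi := (comp_phi_symm_phi β).symm
  calc - Lst.bracket ((ξ ∘ₗ φi) ∘ₗ φi) β (L.phi (L.phi (L.phi y)))
      = - Lst.bracket ((ξ ∘ₗ φi) ∘ₗ φi) ((β ∘ₗ φl) ∘ₗ φi) (L.phi (L.phi (L.phi y))) := by
        rw [← h3]
    _ = - (Lst.bracket (ξ ∘ₗ φi) (β ∘ₗ φl) ∘ₗ φi) (L.phi (L.phi (L.phi y))) := by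
        rw [stm hphi]
    _ = - Lst.bracket (ξ ∘ₗ φi) (β ∘ₗ φl) (L.phi (L.phi y)) := by
        simp

/-- multiplicativity of `A`. -/
lemma keyII (x : g) (η : Module.Dual K g) :
    coadRep L x η ∘ₗ φi = coadRep L (L.phi x) (η ∘ₗ φi) := by
  ext w
  simp [coadRep, pbs, LinearEquiv.symm_apply_apply, LinearEquiv.apply_symm_apply]

end Aux4
section Aux5
open Module LinearMap
set_option linter.unusedSectionVars false
variable {K g : Type*} [Field K] [AddCommGroup g] [Module K g] [FiniteDimensional K g]
variable {L : HomLieAlgebra K g} {Lst : HomLieAlgebra K (Module.Dual K g)}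

local notation "φi" => L.phi.symm.toLinearMap
local notation "φl" => L.phi.toLinearMap

lemma gkey (a b c : g) :
    L.bracket (L.phi b) (L.bracket a c) - L.bracket (L.phi a) (L.bracket b c)
      + L.bracket (L.bracket a b) (L.phi c) = 0 := by
  have hj := L.jacobi b a c
  rw [L.skew c b, map_neg, L.skew b a, map_neg] at hj
  rw [L.skew (L.bracket a b) (L.phi c), sub_eq_add_neg]
  exact hj

/-- rep property of `A = coadRep`. -/
lemma keyIII (x y : g) (ζ : Module.Dual K g) :
    coadRep L (L.phi x) (coadRep L y ζ) - coadRep L (L.phi y) (coadRep L x ζ)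
      - coadRep L (L.bracket x y) (ζ ∘ₗ φi) = 0 := by
  obtain ⟨a, rfl⟩ : ∃ a, L.phi (L.phi a) = x := ⟨L.phi.symm (L.phi.symm x), by simp⟩
  obtain ⟨b, rfl⟩ : ∃ b, L.phi (L.phi b) = y := ⟨L.phi.symm (L.phi.symm y), by simp⟩
  ext w
  obtain ⟨c, rfl⟩ : ∃ c, L.phi (L.phi (L.phi (L.phi c))) = w :=
    ⟨L.phi.symm (L.phi.symm (L.phi.symm (L.phi.symm w))), by simp⟩
  simp [coadRep, pbs, L.phi_bracket]
  rw [← map_sub, ← map_add, gkey, map_zero]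

end Aux5
section Aux6
open Module LinearMap
set_option linter.unusedSectionVars false
variable {K g : Type*} [Field K] [AddCommGroup g] [Module K g] [FiniteDimensional K g]
variable {L : HomLieAlgebra K g} {Lst : HomLieAlgebra K (Module.Dual K g)}

local notation "φi" => L.phi.symm.toLinearMap
local notation "φl" => L.phi.toLinearMap

lemma stkey (hphi : ∀ (ξ : Module.Dual K g) (x : g), Lst.phi ξ x = ξ (L.phi.symm x))
    (a b c : Module.Dual K g) :
    Lst.bracket (b ∘ₗ φi) (Lst.bracket a c) - Lst.bracket (a ∘ₗ φi) (Lst.bracket b c)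
      + Lst.bracket (Lst.bracket a b) (c ∘ₗ φi) = 0 := by
  have h := gkey (L := Lst) a b c
  have hphi' : ∀ ξ, Lst.phi ξ = ξ ∘ₗ φi := fun ξ => LinearMap.ext (hphi ξ)
  rwa [hphi' a, hphi' b, hphi' c] at h

/-- rep property of `S = coadRepStar`. -/
lemma keyIV (hphi : ∀ (ξ : Module.Dual K g) (x : g), Lst.phi ξ x = ξ (L.phi.symm x))
    (η ζ : Module.Dual K g) (x : g) :
    coadRepStar L Lst (η ∘ₗ φi) (coadRepStar L Lst ζ x)
      - coadRepStar L Lst (ζ ∘ₗ φi) (coadRepStar L Lst η x)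
      - coadRepStar L Lst (Lst.bracket η ζ) (L.phi x) = 0 := by
  apply ext_dual (K := K); intro β
  rw [map_sub, map_sub, map_zero, pairS, pairS, pairS, keyI hphi, keyI hphi, keyI hphi,
    keyI hphi, pairS, pairS]
  set c := (β ∘ₗ φl) ∘ₗ φl with hc
  have hb : β = (c ∘ₗ φi) ∘ₗ φi := by ext w; simp [hc]
  have e1 : Lst.bracket ((((ζ ∘ₗ φi) ∘ₗ φi) ∘ₗ φi))
        (Lst.bracket ((η ∘ₗ φi) ∘ₗ φi) β) (L.phi (L.phi (L.phi (L.phi x))))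
      = Lst.bracket (ζ ∘ₗ φi) (Lst.bracket η c) (L.phi (L.phi x)) := by
    rw [hb, stm hphi, stm hphi, stm hphi, stm hphi]
    simp
  have e2 : Lst.bracket ((((η ∘ₗ φi) ∘ₗ φi) ∘ₗ φi))
        (Lst.bracket ((ζ ∘ₗ φi) ∘ₗ φi) β) (L.phi (L.phi (L.phi (L.phi x))))
      = Lst.bracket (η ∘ₗ φi) (Lst.bracket ζ c) (L.phi (L.phi x)) := by
    rw [hb, stm hphi, stm hphi, stm hphi, stm hphi]
    simp
  have e3 : Lst.bracket (Lst.bracket η ζ ∘ₗ φi) β (L.phi (L.phi (L.phi x)))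
      = Lst.bracket (Lst.bracket η ζ) (c ∘ₗ φi) (L.phi (L.phi x)) := by
    rw [hb, stm hphi]
    simp
  rw [e1, e2, e3]
  have h := congrArg (fun F : Module.Dual K g => F (L.phi (L.phi x))) (stkey hphi η ζ c)
  simp only [LinearMap.sub_apply, LinearMap.add_apply, LinearMap.zero_apply] at h
  linear_combination h

end Aux6
section Aux7
open Module LinearMap
set_option linter.unusedSectionVars false
variable {K g : Type*} [Field K] [AddCommGroup g] [Module K g] [FiniteDimensional K g]
variable {L : HomLieAlgebra K g} {Lst : HomLieAlgebra K (Module.Dual K g)}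

local notation "φi" => L.phi.symm.toLinearMap
local notation "φl" => L.phi.toLinearMap

/-- the mixed compatibility on the `g` side. -/
lemma keyV (hphi : ∀ (ξ : Module.Dual K g) (x : g), Lst.phi ξ x = ξ (L.phi.symm x))
    (hcompat : ∀ (x y : g) (ξ η : Module.Dual K g),
      Lst.bracket ξ η (L.bracket x y)
        = adExt L (L.phi.symm x) (fun ξ' η' => Lst.bracket ξ' η' y) ξ η
          - adExt L (L.phi.symm y) (fun ξ' η' => Lst.bracket ξ' η' x) ξ η)
    (x y : g) (ζ : Module.Dual K g) :
    - L.bracket (L.phi x) (coadRepStar L Lst ζ y)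
      - coadRepStar L Lst (coadRep L y ζ) (L.phi x)
      + L.bracket (L.phi y) (coadRepStar L Lst ζ x)
      + coadRepStar L Lst (coadRep L x ζ) (L.phi y)
      + coadRepStar L Lst (ζ ∘ₗ φi) (L.bracket x y) = 0 := by
  apply ext_dual (K := K); intro β
  have h := hcompat (L.phi (L.phi x)) (L.phi (L.phi y)) ((ζ ∘ₗ φi) ∘ₗ φi) β
  simp only [adExt, LinearEquiv.symm_apply_apply, comp_phi_phi_symm] at h
  rw [map_add, map_add, map_add, map_sub, map_neg, map_zero]
  have b1 : β (L.bracket (L.phi x) (coadRepStar L Lst ζ y))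
      = (β ∘ₗ L.bracket (L.phi x)) (coadRepStar L Lst ζ y) := rfl
  have b2 : β (L.bracket (L.phi y) (coadRepStar L Lst ζ x))
      = (β ∘ₗ L.bracket (L.phi y)) (coadRepStar L Lst ζ x) := rfl
  rw [b1, b2, pairS, pairS, pairS, pairS, pairS]
  rw [show L.phi (L.phi (L.bracket x y)) = L.bracket (L.phi (L.phi x)) (L.phi (L.phi y)) by
    rw [L.phi_bracket, L.phi_bracket]]
  rw [h]
  have hb : β = (β ∘ₗ φl) ∘ₗ φi := (comp_phi_symm_phi β).symm
  have f1 : Lst.bracket (coadRep L y ζ ∘ₗ φi) β (L.phi (L.phi (L.phi x)))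
      = - Lst.bracket (((ζ ∘ₗ φi) ∘ₗ φi) ∘ₗ L.bracket (L.phi y)) (β ∘ₗ φl)
          (L.phi (L.phi x)) := by
    have hA : coadRep L y ζ = -((((ζ ∘ₗ φi) ∘ₗ φi) ∘ₗ L.bracket (L.phi y))) := by
      ext w; simp [coadRep]
    rw [hA, LinearMap.neg_comp, map_neg, LinearMap.neg_apply]
    conv_lhs => rw [hb]
    rw [stm hphi]
    simp
  have f2 : Lst.bracket (coadRep L x ζ ∘ₗ φi) β (L.phi (L.phi (L.phi y)))
      = - Lst.bracket (((ζ ∘ₗ φi) ∘ₗ φi) ∘ₗ L.bracket (L.phi x)) (β ∘ₗ φl)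
          (L.phi (L.phi y)) := by
    have hA : coadRep L x ζ = -((((ζ ∘ₗ φi) ∘ₗ φi) ∘ₗ L.bracket (L.phi x))) := by
      ext w; simp [coadRep]
    rw [hA, LinearMap.neg_comp, map_neg, LinearMap.neg_apply]
    conv_lhs => rw [hb]
    rw [stm hphi]
    simp
  rw [f1, f2]
  ring

end Aux7
section Aux8
open Module LinearMap
set_option linter.unusedSectionVars false
variable {K g : Type*} [Field K] [AddCommGroup g] [Module K g] [FiniteDimensional K g]
variable {L : HomLieAlgebra K g} {Lst : HomLieAlgebra K (Module.Dual K g)}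

local notation "φi" => L.phi.symm.toLinearMap
local notation "φl" => L.phi.toLinearMap

/-- the mixed compatibility on the `g*` side. -/
lemma keyVI (hphi : ∀ (ξ : Module.Dual K g) (x : g), Lst.phi ξ x = ξ (L.phi.symm x))
    (hcompat : ∀ (x y : g) (ξ η : Module.Dual K g),
      Lst.bracket ξ η (L.bracket x y)
        = adExt L (L.phi.symm x) (fun ξ' η' => Lst.bracket ξ' η' y) ξ η
          - adExt L (L.phi.symm y) (fun ξ' η' => Lst.bracket ξ' η' x) ξ η)
    (x : g) (η ζ : Module.Dual K g) :
    coadRep L (L.phi x) (Lst.bracket η ζ)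
      - Lst.bracket (η ∘ₗ φi) (coadRep L x ζ)
      - coadRep L (coadRepStar L Lst ζ x) (η ∘ₗ φi)
      + Lst.bracket (ζ ∘ₗ φi) (coadRep L x η)
      + coadRep L (coadRepStar L Lst η x) (ζ ∘ₗ φi) = 0 := by
  obtain ⟨a, rfl⟩ : ∃ a, L.phi a = x := ⟨L.phi.symm x, by simp⟩
  ext w
  obtain ⟨u, rfl⟩ : ∃ u, L.phi (L.phi (L.phi u)) = w :=
    ⟨L.phi.symm (L.phi.symm (L.phi.symm w)), by simp⟩
  have h := hcompat (L.phi a) (L.phi u) η ζ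
  simp only [adExt, LinearEquiv.symm_apply_apply] at h
  simp only [LinearMap.add_apply, LinearMap.sub_apply, LinearMap.zero_apply,
    coadRep_apply, pbs, LinearEquiv.symm_apply_apply, LinearMap.comp_apply,
    LinearEquiv.coe_coe]
  have key3 : ∀ μ ν : Module.Dual K g, ∀ b : g,
      Lst.bracket (μ ∘ₗ φi) ((ν ∘ₗ φi) ∘ₗ φi) (L.phi (L.phi (L.phi b)))
        = Lst.bracket (μ ∘ₗ φl) ν (L.phi b) := by
    intro μ ν b
    conv_lhs => rw [show μ ∘ₗ φi = (((μ ∘ₗ φl) ∘ₗ φi) ∘ₗ φi : Module.Dual K g) from by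
      ext; simp]
    rw [stm hphi, stm hphi]; simp
  have e2 : Lst.bracket (η ∘ₗ φi) (coadRep L (L.phi a) ζ) (L.phi (L.phi (L.phi u)))
      = - Lst.bracket (η ∘ₗ φl) (ζ ∘ₗ L.bracket a) (L.phi u) := by
    have hA : coadRep L (L.phi a) ζ = -(((ζ ∘ₗ L.bracket a) ∘ₗ φi) ∘ₗ φi) := by
      ext w'; simp [coadRep, pbs]
    rw [hA, map_neg, LinearMap.neg_apply, key3]
  have e4 : Lst.bracket (ζ ∘ₗ φi) (coadRep L (L.phi a) η) (L.phi (L.phi (L.phi u)))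
      = - Lst.bracket (ζ ∘ₗ φl) (η ∘ₗ L.bracket a) (L.phi u) := by
    have hA : coadRep L (L.phi a) η = -(((η ∘ₗ L.bracket a) ∘ₗ φi) ∘ₗ φi) := by
      ext w'; simp [coadRep, pbs]
    rw [hA, map_neg, LinearMap.neg_apply, key3]
  have e3 : η (L.bracket (L.phi.symm (L.phi.symm (coadRepStar L Lst ζ (L.phi a)))) u)
      = Lst.bracket (ζ ∘ₗ φl) (η ∘ₗ L.bracket u) (L.phi a) := by
    rw [L.skew, map_neg]
    rw [show η ((L.bracket u) (L.phi.symm (L.phi.symm (coadRepStar L Lst ζ (L.phi a)))))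
        = (((η ∘ₗ L.bracket u) ∘ₗ φi) ∘ₗ φi) (coadRepStar L Lst ζ (L.phi a)) from by simp]
    rw [pairS, key3]
    ring
  have e5 : ζ (L.bracket (L.phi.symm (L.phi.symm (coadRepStar L Lst η (L.phi a)))) u)
      = Lst.bracket (η ∘ₗ φl) (ζ ∘ₗ L.bracket u) (L.phi a) := by
    rw [L.skew, map_neg]
    rw [show ζ ((L.bracket u) (L.phi.symm (L.phi.symm (coadRepStar L Lst η (L.phi a)))))
        = (((ζ ∘ₗ L.bracket u) ∘ₗ φi) ∘ₗ φi) (coadRepStar L Lst η (L.phi a)) from by simp]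
    rw [pairS, key3]
    ring
  rw [e2, e3, e4, e5, h]
  rw [Lst.skew (η ∘ₗ L.bracket a) (ζ ∘ₗ φl), Lst.skew (η ∘ₗ L.bracket u) (ζ ∘ₗ φl)]
  simp only [LinearMap.neg_apply]
  ring

end Aux8
section Aux9
open Module LinearMap
set_option linter.unusedSectionVars false
variable {K g : Type*} [Field K] [AddCommGroup g] [Module K g] [FiniteDimensional K g]
variable {L : HomLieAlgebra K g} {Lst : HomLieAlgebra K (Module.Dual K g)}

local notation "φi" => L.phi.symm.toLinearMap
local notation "φl" => L.phi.toLinearMap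

lemma coadRep_neg_right (x : g) (η : Module.Dual K g) :
    coadRep L x (-η) = - coadRep L x η := by ext w; simp [coadRep]

lemma coadRep_neg_left (x : g) (η : Module.Dual K g) :
    coadRep L (-x) η = - coadRep L x η := by ext w; simp [coadRep]

lemma S_neg_left (ξ : Module.Dual K g) (y : g) :
    coadRepStar L Lst (-ξ) y = - coadRepStar L Lst ξ y := by
  apply ext_dual (K := K); intro β; simp [pairS, neg_comp]

lemma S_neg_right (ξ : Module.Dual K g) (y : g) :
    coadRepStar L Lst ξ (-y) = - coadRepStar L Lst ξ y := by
  apply ext_dual (K := K); intro β; simp [pairS]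

lemma caseGGG (x y z : g) : Jc L Lst (x, 0) (y, 0) (z, 0) = 0 := by
  have hj := L.jacobi x y z
  simp [Jc, dbBracket, dbPhi, S_zero_left, S_zero_right, coadRep_zero_left,
    coadRep_zero_right, zero_comp, Prod.ext_iff, hj]

lemma caseSSS (hphi : ∀ (ξ : Module.Dual K g) (x : g), Lst.phi ξ x = ξ (L.phi.symm x))
    (ξ η ζ : Module.Dual K g) : Jc L Lst (0, ξ) (0, η) (0, ζ) = 0 := by
  have hphi' : ∀ μ, Lst.phi μ = μ ∘ₗ φi := fun μ => LinearMap.ext (hphi μ)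
  have hj := Lst.jacobi ξ η ζ
  rw [hphi', hphi', hphi'] at hj
  simp [Jc, dbBracket, dbPhi, S_zero_left, S_zero_right, coadRep_zero_left,
    coadRep_zero_right, zero_comp, Prod.ext_iff, hj]

lemma caseGGS (hphi : ∀ (ξ : Module.Dual K g) (x : g), Lst.phi ξ x = ξ (L.phi.symm x))
    (hcompat : ∀ (x y : g) (ξ η : Module.Dual K g),
      Lst.bracket ξ η (L.bracket x y)
        = adExt L (L.phi.symm x) (fun ξ' η' => Lst.bracket ξ' η' y) ξ η
          - adExt L (L.phi.symm y) (fun ξ' η' => Lst.bracket ξ' η' x) ξ η)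
    (x y : g) (ζ : Module.Dual K g) : Jc L Lst (x, 0) (y, 0) (0, ζ) = 0 := by
  simp only [Jc, dbBracket, dbPhi, Prod.ext_iff, Prod.fst_add, Prod.snd_add, map_zero,
    S_zero_left, S_zero_right, coadRep_zero_left, coadRep_zero_right, zero_comp,
    LinearMap.zero_apply, map_neg, S_neg_left, S_neg_right, coadRep_neg_left,
    coadRep_neg_right, add_zero, zero_add, sub_zero, zero_sub, neg_neg,
    Prod.mk_add_mk, Prod.mk_eq_zero, Prod.fst_zero, Prod.snd_zero, neg_zero]
  constructor
  · have h := keyV hphi hcompat x y ζ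
    rw [← h]; abel
  · have h := keyIII (L := L) x y ζ
    rw [← h]; abel

lemma caseGSS (hphi : ∀ (ξ : Module.Dual K g) (x : g), Lst.phi ξ x = ξ (L.phi.symm x))
    (hcompat : ∀ (x y : g) (ξ η : Module.Dual K g),
      Lst.bracket ξ η (L.bracket x y)
        = adExt L (L.phi.symm x) (fun ξ' η' => Lst.bracket ξ' η' y) ξ η
          - adExt L (L.phi.symm y) (fun ξ' η' => Lst.bracket ξ' η' x) ξ η)
    (x : g) (η ζ : Module.Dual K g) : Jc L Lst (x, 0) (0, η) (0, ζ) = 0 := by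
  simp only [Jc, dbBracket, dbPhi, Prod.ext_iff, Prod.fst_add, Prod.snd_add, map_zero,
    S_zero_left, S_zero_right, coadRep_zero_left, coadRep_zero_right, zero_comp,
    LinearMap.zero_apply, map_neg, S_neg_left, S_neg_right, coadRep_neg_left,
    coadRep_neg_right, add_zero, zero_add, sub_zero, zero_sub, neg_neg,
    Prod.mk_add_mk, Prod.mk_eq_zero, Prod.fst_zero, Prod.snd_zero, neg_zero]
  constructor
  · have h := keyIV hphi η ζ x
    rw [← h]; abel
  · have h := keyVI hphi hcompat x η ζ
    rw [← h]; abel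

end Aux9

/-- if `(g,g*)` is a purely Hom-Lie bialgebra, then
`(g ⊕ g*, [·,·]_⋈, φ ⊕ (φ⁻¹)*, B)` is a quadratic Hom-Lie algebra and
`(g ⊕ g*; g, g*)` is a Manin triple for Hom-Lie algebras. -/
theorem bialgebra_to_manin (L : HomLieAlgebra K g)
    (Lst : HomLieAlgebra K (Dual K g))
    (hphi : ∀ (ξ : Dual K g) (x : g), Lst.phi ξ x = ξ (L.phi.symm x))
    (hcompat : ∀ (x y : g) (ξ η : Dual K g),
      Lst.bracket ξ η (L.bracket x y)
        = adExt L (L.phi.symm x) (fun ξ' η' => Lst.bracket ξ' η' y) ξ η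
          - adExt L (L.phi.symm y) (fun ξ' η' => Lst.bracket ξ' η' x) ξ η) :
    -- Hom-Lie algebra structure on the double
    (∀ p q : g × Dual K g, dbBracket L Lst p q = - dbBracket L Lst q p) ∧
    (∀ p q : g × Dual K g,
      dbPhi L (dbBracket L Lst p q) = dbBracket L Lst (dbPhi L p) (dbPhi L q)) ∧
    (∀ p q r : g × Dual K g,
      dbBracket L Lst (dbPhi L p) (dbBracket L Lst q r)
        + dbBracket L Lst (dbPhi L q) (dbBracket L Lst r p)
        + dbBracket L Lst (dbPhi L r) (dbBracket L Lst p q) = 0) ∧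
    -- the bilinear form is invariant (quadratic Hom-Lie algebra)
    (∀ p q r : g × Dual K g,
      dbForm (dbBracket L Lst p q) (dbPhi L r) = - dbForm (dbPhi L q) (dbBracket L Lst p r)) ∧
    (∀ p q : g × Dual K g, dbForm (dbPhi L p) (dbPhi L q) = dbForm p q) ∧
    -- g and g* are isotropic Hom-Lie subalgebras
    (∀ x y : g, dbBracket L Lst (x, 0) (y, 0) = (L.bracket x y, 0)) ∧
    (∀ ξ η : Dual K g, dbBracket L Lst (0, ξ) (0, η) = (0, Lst.bracket ξ η)) ∧
    (∀ x y : g, dbForm ((x, 0) : g × Dual K g) ((y, 0) : g × Dual K g) = 0) ∧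
    (∀ ξ η : Dual K g, dbForm ((0, ξ) : g × Dual K g) ((0, η) : g × Dual K g) = 0) := by

  obtain ⟨hphi', hcompat'⟩ := And.intro hphi hcompat
  refine ⟨?_, ?_, ?_, ?_, ?_, ?_, ?_, ?_, ?_⟩
  · -- skew
    intro p q
    apply Prod.ext
    · simp only [dbBracket, Prod.fst_neg]
      rw [L.skew p.1 q.1]; abel
    · simp only [dbBracket, Prod.snd_neg]
      rw [Lst.skew p.2 q.2]; abel
  · -- multiplicativity
    intro p q
    apply Prod.ext
    · simp only [dbPhi, dbBracket, map_add, map_sub, L.phi_bracket, keyI hphi]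
    · simp only [dbPhi, dbBracket, add_comp, sub_comp, keyII, ← stm hphi]
  · -- Jacobi
    intro p q r
    suffices h : Jc L Lst p q r = 0 by exact h
    have cGGS := caseGGS hphi hcompat
    have cGSS := caseGSS hphi hcompat
    have cSSS := caseSSS (L := L) (Lst := Lst) hphi
    have cGSG : ∀ (x : g) (η : Module.Dual K g) (z : g),
        Jc L Lst (x, 0) (0, η) (z, 0) = 0 := fun x η z => by
      rw [Jc_cyc, Jc_cyc]; exact cGGS z x η
    have cSGG : ∀ (ξ : Module.Dual K g) (y z : g),
        Jc L Lst (0, ξ) (y, 0) (z, 0) = 0 := fun ξ y z => by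
      rw [Jc_cyc]; exact cGGS y z ξ
    have cSGS : ∀ (ξ : Module.Dual K g) (y : g) (ζ : Module.Dual K g),
        Jc L Lst (0, ξ) (y, 0) (0, ζ) = 0 := fun ξ y ζ => by
      rw [Jc_cyc]; exact cGSS y ζ ξ
    have cSSG : ∀ (ξ η : Module.Dual K g) (z : g),
        Jc L Lst (0, ξ) (0, η) (z, 0) = 0 := fun ξ η z => by
      rw [Jc_cyc, Jc_cyc]; exact cGSS z ξ η
    have hp : p = (p.1, (0 : Module.Dual K g)) + ((0 : g), p.2) := by
      apply Prod.ext <;> simp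
    have hq : q = (q.1, (0 : Module.Dual K g)) + ((0 : g), q.2) := by
      apply Prod.ext <;> simp
    have hr : r = (r.1, (0 : Module.Dual K g)) + ((0 : g), r.2) := by
      apply Prod.ext <;> simp
    rw [hp, hq, hr]
    simp only [Jc_add1, Jc_add2, Jc_add3, caseGGG, cGGS, cGSG, cSGG, cGSS, cSGS, cSSG, cSSS]
    simp
  · -- invariance
    intro p q r
    have s1 : (r.2 ∘ₗ L.phi.symm.toLinearMap) (coadRepStar L Lst p.2 q.1)
        = - Lst.bracket p.2 r.2 (L.phi q.1) := by
      rw [pairS, stm hphi]; simp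
    have s2 : (r.2 ∘ₗ L.phi.symm.toLinearMap) (coadRepStar L Lst q.2 p.1)
        = - Lst.bracket q.2 r.2 (L.phi p.1) := by
      rw [pairS, stm hphi]; simp
    have s3 : (q.2 ∘ₗ L.phi.symm.toLinearMap) (coadRepStar L Lst p.2 r.1)
        = - Lst.bracket p.2 q.2 (L.phi r.1) := by
      rw [pairS, stm hphi]; simp
    have s4 : (q.2 ∘ₗ L.phi.symm.toLinearMap) (coadRepStar L Lst r.2 p.1)
        = - Lst.bracket r.2 q.2 (L.phi p.1) := by
      rw [pairS, stm hphi]; simp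
    simp only [dbForm, dbBracket, dbPhi, LinearMap.add_apply, LinearMap.sub_apply,
      map_add, map_sub, s1, s2, s3, s4, coadRep_apply, pbs, LinearEquiv.symm_apply_apply]
    simp only [LinearMap.comp_apply, pbs, LinearEquiv.coe_coe]
    rw [Lst.skew r.2 q.2, L.skew (L.phi.symm r.1) (L.phi.symm q.1)]
    simp only [LinearMap.neg_apply, map_neg]
    ring
  · -- form invariant under phi
    intro p q
    simp [dbForm, dbPhi]
  · intro x y
    apply Prod.ext <;>
      simp [dbBracket, S_zero_left, S_zero_right, coadRep_zero_left, coadRep_zero_right]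
  · intro ξ η
    apply Prod.ext <;>
      simp [dbBracket, S_zero_left, S_zero_right, coadRep_zero_left, coadRep_zero_right]
  · intro x y; simp [dbForm]
  · intro ξ η; simp [dbForm]
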